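/- Consider the discrete-time linear system x⁺ = A x + B u + w with A ∈ ℝ^{n×n}, B ∈ ℝ^{n×m}, feedback gain K ∈ ℝ^{m×n}, A_K = A + BK, and disturbance zonotope W = ⟨c_ω, G_ω⟩ ⊂ ℝ^n with G_ω ∈ ℝ^{n×D_ω}. Let G ∈ ℝ^{n×D}, δ, δ⁺ ∈ ℝ^D with δ ≥ 0 and δ⁺ ≥ 0 componentwise, Δ = diag(δ), Δ⁺ = diag(δ⁺), centers c, c⁺ ∈ ℝ^n, nominal states x̄, x̄⁺ ∈ ℝ^n, nominal input ū ∈ ℝ^m; set D̄ = 1 + D + D_ω and V = [I_{D̄} −I_{D̄}]. If there exists Φ ∈ ℝ^{2D̄×D} with G Φᵀ Vᵀ = [ (−c⁺ − x̄⁺ + A x̄ + B ū + A_K c + c_ω) A_K G Δ G_ω ], Φ ≥ 0 entrywise, and Φᵀ 1_{2D̄} ≤ δ⁺ componentwise, then for every x ∈ {x̄} ⊕ ⟨c, GΔ⟩ and every w ∈ W, the successor state A x + B(ū + K(x − x̄)) + w belongs to {x̄⁺} ⊕ ⟨c⁺, G Δ⁺⟩. -/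

import Mathlib

open Matrix Pointwise BigOperators

/-- The zonotope `⟨c, G⟩ = {c + Gξ : ‖ξ‖_∞ ≤ 1}` (sup norm on the Pi type). -/
def zonotope {d D : Type*} [Fintype d] [Fintype D]
    (c : d → ℝ) (G : Matrix d D ℝ) : Set (d → ℝ) :=
  {x | ∃ ξ : D → ℝ, ‖ξ‖ ≤ 1 ∧ x = c + G.mulVec ξ}

/-- The `Φ`-certificate version of the one-step reachability condition: if
`G Φᵀ Vᵀ = [ (−c⁺ − x̄⁺ + A x̄ + B ū + A_K c + c_ω)  A_K G Δ  G_ω ]`, `Φ ≥ 0`,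
`Φᵀ 1 ≤ δ⁺` (block columns indexed by `Unit ⊕ Fin D ⊕ Fin Dω`, `D̄ = 1 + D + Dω`),
then for every `x ∈ {x̄} ⊕ ⟨c, GΔ⟩` and `w ∈ W`, the successor
`A x + B(ū + K(x − x̄)) + w` lies in `{x̄⁺} ⊕ ⟨c⁺, GΔ⁺⟩`. -/
theorem one_step_reachability_Phi
    {n m D Dω : ℕ}
    (A : Matrix (Fin n) (Fin n) ℝ) (B : Matrix (Fin n) (Fin m) ℝ)
    (K : Matrix (Fin m) (Fin n) ℝ)
    (cω : Fin n → ℝ) (Gω : Matrix (Fin n) (Fin Dω) ℝ)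
    (G : Matrix (Fin n) (Fin D) ℝ)
    (δ δp : Fin D → ℝ) (hδ : ∀ j, 0 ≤ δ j) (hδp : ∀ j, 0 ≤ δp j)
    (c cp xbar xbarp : Fin n → ℝ) (ubar : Fin m → ℝ)
    (Φ : Matrix ((Unit ⊕ Fin D ⊕ Fin Dω) ⊕ (Unit ⊕ Fin D ⊕ Fin Dω)) (Fin D) ℝ)
    (hΦeq : G * ((Φᵀ * (Matrix.fromCols
        (1 : Matrix (Unit ⊕ Fin D ⊕ Fin Dω) (Unit ⊕ Fin D ⊕ Fin Dω) ℝ) (-1))ᵀ : Matrix (Fin D) (Unit ⊕ Fin D ⊕ Fin Dω) ℝ))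
      = Matrix.of fun r j =>
          Sum.elim (fun _ : Unit =>
              -cp r - xbarp r + A.mulVec xbar r + B.mulVec ubar r
                + (A + B * K).mulVec c r + cω r)
            (Sum.elim (fun k => ((A + B * K) * G * Matrix.diagonal δ) r k)
                      (fun k => Gω r k)) j)
    (hΦpos : ∀ r j, 0 ≤ Φ r j)
    (hΦsum : ∀ j, ∑ r, Φ r j ≤ δp j) :
    ∀ x ∈ ({xbar} : Set (Fin n → ℝ)) + zonotope c (G * Matrix.diagonal δ),
    ∀ w ∈ zonotope cω Gω,
      A.mulVec x + B.mulVec (ubar + K.mulVec (x - xbar)) + w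
        ∈ ({xbarp} : Set (Fin n → ℝ)) + zonotope cp (G * Matrix.diagonal δp) := by
  rintro x hx w hw
  rw [Set.mem_add] at hx
  obtain ⟨a, ha, b, hb, hab⟩ := hx
  obtain ⟨ξ, hξ, rfl⟩ := hb
  obtain ⟨η, hη, rfl⟩ := hw
  rw [Set.mem_singleton_iff] at ha
  subst hab
  obtain rfl := ha.symm
  have hξ1 : ∀ j, |ξ j| ≤ 1 := by
    intro j
    have := (pi_norm_le_iff_of_nonneg zero_le_one).mp hξ j
    simpa [Real.norm_eq_abs] using this
  have hη1 : ∀ j, |η j| ≤ 1 := by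
    intro j
    have := (pi_norm_le_iff_of_nonneg zero_le_one).mp hη j
    simpa [Real.norm_eq_abs] using this
  -- the combined generator vector
  set y : (Unit ⊕ Fin D ⊕ Fin Dω) → ℝ :=
    Sum.elim (fun _ => (1 : ℝ)) (Sum.elim ξ η) with hy
  have hy1 : ∀ r, |y r| ≤ 1 := by
    rintro (r | r | r) <;> simp [hy, hξ1, hη1]
  set z : ((Unit ⊕ Fin D ⊕ Fin Dω) ⊕ (Unit ⊕ Fin D ⊕ Fin Dω)) → ℝ :=
    Sum.elim y (fun r => -(y r)) with hzdef
  have hz1 : ∀ r, |z r| ≤ 1 := by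
    rintro (r | r) <;> simp [hzdef, hy1]
  set ζ : Fin D → ℝ := Φᵀ.mulVec z with hzeta
  have hζbound : ∀ j, |ζ j| ≤ δp j := by
    intro j
    refine le_trans ?_ (hΦsum j)
    calc |ζ j| = |∑ r, Φ r j * z r| := by
          simp [hzeta, Matrix.mulVec, dotProduct, Matrix.transpose_apply]
      _ ≤ ∑ r, |Φ r j * z r| := Finset.abs_sum_le_sum_abs _ _
      _ ≤ ∑ r, Φ r j := by
          refine Finset.sum_le_sum fun r _ => ?_
          rw [abs_mul, abs_of_nonneg (hΦpos r j)]
          calc Φ r j * |z r| ≤ Φ r j * 1 :=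
                mul_le_mul_of_nonneg_left (hz1 r) (hΦpos r j)
            _ = Φ r j := mul_one _
  set ξ' : Fin D → ℝ := fun j => if δp j = 0 then 0 else ζ j / δp j with hξ'
  have hξ'1 : ∀ j, |ξ' j| ≤ 1 := by
    intro j
    by_cases h : δp j = 0
    · simp [hξ', h]
    · have hpos : 0 < δp j := lt_of_le_of_ne (hδp j) (Ne.symm h)
      simp only [hξ', if_neg h, abs_div, abs_of_pos hpos]
      rw [div_le_one hpos]
      exact hζbound j
  have hdξ' : ∀ j, δp j * ξ' j = ζ j := by
    intro j
    by_cases h : δp j = 0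
    · have : |ζ j| ≤ 0 := h ▸ hζbound j
      have : ζ j = 0 := abs_nonpos_iff.mp this
      simp [hξ', h, this]
    · simp only [hξ', if_neg h]
      field_simp
  refine Set.mem_add.mpr ⟨xbarp, rfl, cp + (G * Matrix.diagonal δp).mulVec ξ',
    ⟨ξ', (pi_norm_le_iff_of_nonneg zero_le_one).mpr
      (fun j => by simpa [Real.norm_eq_abs] using hξ'1 j), rfl⟩, ?_⟩
  -- main algebraic identity
  have hdiag : (Matrix.diagonal δp).mulVec ξ' = ζ := by
    funext j; rw [Matrix.mulVec_diagonal]; exact hdξ' j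
  have hGζ : G.mulVec ζ = fun r =>
      (-cp r - xbarp r + A.mulVec xbar r + B.mulVec ubar r
          + (A + B * K).mulVec c r + cω r)
        + ((A + B * K) * G * Matrix.diagonal δ).mulVec ξ r
        + Gω.mulVec η r := by
    have hVy : ((Matrix.fromCols
        (1 : Matrix (Unit ⊕ Fin D ⊕ Fin Dω) (Unit ⊕ Fin D ⊕ Fin Dω) ℝ) (-1))ᵀ).mulVec y = z := by
      rw [Matrix.transpose_fromCols, Matrix.transpose_one, Matrix.transpose_neg,
        Matrix.transpose_one, Matrix.fromRows_mulVec, Matrix.one_mulVec, Matrix.neg_mulVec,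
        Matrix.one_mulVec]
      rfl
    have : G.mulVec ζ = (G * ((Φᵀ * (Matrix.fromCols
        (1 : Matrix (Unit ⊕ Fin D ⊕ Fin Dω) (Unit ⊕ Fin D ⊕ Fin Dω) ℝ) (-1))ᵀ : Matrix (Fin D) (Unit ⊕ Fin D ⊕ Fin Dω) ℝ))).mulVec y := by
      rw [← Matrix.mulVec_mulVec]
      congr 1
      rw [hzeta, ← hVy]
      exact Matrix.mulVec_mulVec _ _ _
    rw [this, hΦeq]
    funext r
    simp only [Matrix.mulVec, dotProduct, Matrix.of_apply]
    rw [Fintype.sum_sum_type, Fintype.sum_sum_type]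
    simp [hy, mul_comm]
    ring
  funext r
  have key := congrFun hGζ r
  have hGdp : (G * Matrix.diagonal δp).mulVec ξ' = G.mulVec ζ := by
    rw [← Matrix.mulVec_mulVec, hdiag]
  rw [hGdp]
  simp only [Pi.add_apply, key, Matrix.mulVec_add, Matrix.add_mulVec,
    Matrix.mulVec_mulVec] at *
  have e1 : xbar + (c + (G * Matrix.diagonal δ).mulVec ξ) - xbar
      = c + (G * Matrix.diagonal δ).mulVec ξ := by abel
  simp only [e1]
  simp only [Matrix.mulVec_add, Matrix.add_mulVec, Matrix.mulVec_mulVec, Pi.add_apply,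
    Matrix.add_mul, Matrix.mul_assoc]
  ring
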